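/- Let 1 ≤ p₁ ≤ p₂ < ∞ and let φ₁, φ₂ be positive functions on the odd naturals. Suppose there exists C > 0 such that φ₂(2N+1) ≤ C φ₁(2N+1) for every N ∈ ℕ. Then for every sequence x, ‖x‖_{wℓ^{p₁}_{φ₁}} ≤ C ‖x‖_{wℓ^{p₂}_{φ₂}}; in particular wℓ^{p₂}_{φ₂} ⊆ wℓ^{p₁}_{φ₁}. -/

import Mathlib

open scoped ENNReal NNReal BigOperators

/-- The discrete "ball" `S_{m,N} = {m-N, …, m+N}` as a finite set of integers. -/
noncomputable def S (m : ℤ) (N : ℕ) : Finset ℤ := Finset.Icc (m - N) (m + N)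

open Classical in
/-- The cardinality of `{k ∈ S_{m,N} : |x_k| > γ}`. -/
noncomputable def weakCard (x : ℤ → ℂ) (m : ℤ) (N : ℕ) (γ : ℝ≥0) : ℕ :=
  ((S m N).filter (fun k => γ < ‖x k‖₊)).card

/-- The generalized weak type discrete Morrey norm `‖x‖_{wℓ^p_φ}`. -/
noncomputable def wgMorreyNorm (p : ℝ) (φ : ℕ → ℝ) (x : ℤ → ℂ) : ℝ≥0∞ :=
  ⨆ (m : ℤ) (N : ℕ) (γ : ℝ≥0) (_ : 0 < γ),
    (ENNReal.ofReal (φ (2 * N + 1)))⁻¹ * (γ : ℝ≥0∞) *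
      ((weakCard x m N γ : ℝ≥0∞) / (2 * (N : ℝ≥0∞) + 1)) ^ (1 / p)


theorem stmt17 (p₁ p₂ : ℝ) (hp₁ : 1 ≤ p₁) (hp : p₁ ≤ p₂)
    (φ₁ φ₂ : ℕ → ℝ)
    (hφ₁ : ∀ N : ℕ, 0 < φ₁ (2 * N + 1)) (hφ₂ : ∀ N : ℕ, 0 < φ₂ (2 * N + 1))
    (C : ℝ) (hC : 0 < C) (h : ∀ N : ℕ, φ₂ (2 * N + 1) ≤ C * φ₁ (2 * N + 1)) :
    ∀ x : ℤ → ℂ, wgMorreyNorm p₁ φ₁ x ≤ ENNReal.ofReal C * wgMorreyNorm p₂ φ₂ x := by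
  intro x
  rw [wgMorreyNorm]
  refine iSup_le fun m => iSup_le fun N => iSup_le fun γ => iSup_le fun hγ => ?_
  -- ratio ≤ 1
  have hcardS : (S m N).card = 2 * N + 1 := by
    simp [S, Int.card_Icc]
    omega
  have hratio : ((weakCard x m N γ : ℝ≥0∞) / (2 * (N : ℝ≥0∞) + 1)) ≤ 1 := by
    rw [ENNReal.div_le_iff (by intro hh; have := congrArg (· + 0) hh; simp at hh) (by finiteness), one_mul]
    have : weakCard x m N γ ≤ 2 * N + 1 := hcardS ▸ Finset.card_filter_le _ _
    calc (weakCard x m N γ : ℝ≥0∞) ≤ ((2 * N + 1 : ℕ) : ℝ≥0∞) := by exact_mod_cast this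
      _ = 2 * (N : ℝ≥0∞) + 1 := by push_cast; ring
  have hpow : ((weakCard x m N γ : ℝ≥0∞) / (2 * (N : ℝ≥0∞) + 1)) ^ (1 / p₁)
      ≤ ((weakCard x m N γ : ℝ≥0∞) / (2 * (N : ℝ≥0∞) + 1)) ^ (1 / p₂) := by
    apply ENNReal.rpow_le_rpow_of_exponent_ge hratio
    apply one_div_le_one_div_of_le (by linarith) hp
  have hCne0 : ENNReal.ofReal C ≠ 0 := by simp [ENNReal.ofReal_eq_zero, not_le, hC]
  have hCnetop : ENNReal.ofReal C ≠ ⊤ := by finiteness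
  have h1 : ENNReal.ofReal (φ₂ (2 * N + 1)) ≤ ENNReal.ofReal C * ENNReal.ofReal (φ₁ (2 * N + 1)) := by
    rw [← ENNReal.ofReal_mul hC.le]; exact ENNReal.ofReal_le_ofReal (h N)
  have h2 := ENNReal.inv_le_inv.mpr h1
  rw [ENNReal.mul_inv (Or.inl hCne0) (Or.inl hCnetop)] at h2
  have hinv : (ENNReal.ofReal (φ₁ (2 * N + 1)))⁻¹
      ≤ ENNReal.ofReal C * (ENNReal.ofReal (φ₂ (2 * N + 1)))⁻¹ := by
    calc (ENNReal.ofReal (φ₁ (2 * N + 1)))⁻¹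
        = ENNReal.ofReal C * ((ENNReal.ofReal C)⁻¹ * (ENNReal.ofReal (φ₁ (2 * N + 1)))⁻¹) := by
          rw [← mul_assoc, ENNReal.mul_inv_cancel hCne0 hCnetop, one_mul]
      _ ≤ ENNReal.ofReal C * (ENNReal.ofReal (φ₂ (2 * N + 1)))⁻¹ := mul_le_mul' le_rfl h2
  calc (ENNReal.ofReal (φ₁ (2 * N + 1)))⁻¹ * (γ : ℝ≥0∞) *
        ((weakCard x m N γ : ℝ≥0∞) / (2 * (N : ℝ≥0∞) + 1)) ^ (1 / p₁)
      ≤ (ENNReal.ofReal C * (ENNReal.ofReal (φ₂ (2 * N + 1)))⁻¹) * (γ : ℝ≥0∞) *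
        ((weakCard x m N γ : ℝ≥0∞) / (2 * (N : ℝ≥0∞) + 1)) ^ (1 / p₂) := by
        exact mul_le_mul' (mul_le_mul' hinv le_rfl) hpow
    _ = ENNReal.ofReal C * ((ENNReal.ofReal (φ₂ (2 * N + 1)))⁻¹ * (γ : ℝ≥0∞) *
        ((weakCard x m N γ : ℝ≥0∞) / (2 * (N : ℝ≥0∞) + 1)) ^ (1 / p₂)) := by ring
    _ ≤ ENNReal.ofReal C * wgMorreyNorm p₂ φ₂ x := by
        gcongr
        rw [wgMorreyNorm]
        refine le_iSup_of_le m (le_iSup_of_le N (le_iSup_of_le γ (le_iSup_of_le hγ le_rfl)))
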